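/- Fix an integer r ≥ 2 and let g be an integer with g ≥ 4(r+1)^{5/2} + (r+1)² + 2(r+1)^{3/2}. Then for every integer s with r < s and s(s+1) ≤ g (equivalently d_max(g,s) ≤ g−1), one has κ(g,r,d_max(g,r)) > κ(g,s,d_max(g,s)). -/

import Mathlib

noncomputable section

/-- The Brill--Noether number `ρ(g,r,d) = g - (r+1)(g-d+r)`. -/
def rho (g r d : ℤ) : ℤ := g - (r + 1) * (g - d + r)

/-- Pflueger's Brill--Noether number `ρ_k(g,r,d)`, the maximum of
`ρ(g,r-ℓ,d) - ℓk` over integers `0 ≤ ℓ ≤ min r (g-d+r-1)`. -/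
def rhoK (g r d k : ℤ) : ℤ :=
  sSup ((fun ℓ : ℤ => rho g (r - ℓ) d - ℓ * k) '' Set.Icc 0 (min r (g - d + r - 1)))

/-- `κ(g,r,d)`: the greatest integer `k ≥ 1` such that `ρ_k(g,r,d) ≥ 0`. -/
def kappa (g r d : ℤ) : ℤ := sSup {k : ℤ | 1 ≤ k ∧ 0 ≤ rhoK g r d k}

/-- `d_max(g,r) = r + ⌈gr/(r+1)⌉ - 1`, the largest `d` with `ρ(g,r,d) < 0`. -/
def dmax (g r : ℤ) : ℤ := r + ⌈((g : ℚ) * r) / ((r : ℚ) + 1)⌉ - 1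

lemma gdr_eq (g r q : ℤ) (hR : 0 < r + 1) (h1 : (r+1)*q ≤ g) (h2 : g < (r+1)*q + (r+1)) :
    g - dmax g r + r = q + 1 := by
  have hR' : (0:ℚ) < (r:ℚ) + 1 := by exact_mod_cast hR
  have hfloor : ⌊(g:ℚ)/((r:ℚ)+1)⌋ = q := by
    rw [Int.floor_eq_iff]
    constructor
    · rw [le_div_iff₀ hR']
      have : ((r+1)*q : ℚ) ≤ (g:ℚ) := by exact_mod_cast h1
      linarith
    · rw [div_lt_iff₀ hR']
      have : (g:ℚ) < ((r+1)*q + (r+1) : ℤ) := by exact_mod_cast h2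
      push_cast at this ⊢
      linarith
  have hceil : ⌈((g:ℚ)*r)/((r:ℚ)+1)⌉ = g - q := by
    have hne : ((r:ℚ)+1) ≠ 0 := ne_of_gt hR'
    have heq : ((g:ℚ)*r)/((r:ℚ)+1) = -((g:ℚ)/((r:ℚ)+1) - (g:ℤ)) := by
      field_simp
      ring
    rw [heq, Int.ceil_neg, Int.floor_sub_intCast, hfloor]
    ring
  unfold dmax
  rw [hceil]
  ring

lemma rhoK_ge (g r d k ℓ : ℤ) (h0 : 0 ≤ ℓ) (hℓ : ℓ ≤ min r (g - d + r - 1)) :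
    rho g (r - ℓ) d - ℓ * k ≤ rhoK g r d k :=
  le_csSup ((Set.finite_Icc _ _).image _).bddAbove (Set.mem_image_of_mem _ ⟨h0, hℓ⟩)

lemma rhoK_attained (g r d k : ℤ) (h : 0 ≤ min r (g - d + r - 1)) :
    ∃ ℓ, 0 ≤ ℓ ∧ ℓ ≤ min r (g - d + r - 1) ∧
      rhoK g r d k = rho g (r - ℓ) d - ℓ * k := by
  have hne : (Set.Icc (0:ℤ) (min r (g-d+r-1))).Nonempty := Set.nonempty_Icc.mpr h
  have hmem : sSup ((fun ℓ : ℤ => rho g (r - ℓ) d - ℓ * k) '' Set.Icc 0 (min r (g - d + r - 1)))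
      ∈ ((fun ℓ : ℤ => rho g (r - ℓ) d - ℓ * k) '' Set.Icc 0 (min r (g - d + r - 1))) :=
    (hne.image _).csSup_mem ((Set.finite_Icc _ _).image _)
  obtain ⟨ℓ, hℓ, heq⟩ := hmem
  exact ⟨ℓ, hℓ.1, hℓ.2, heq.symm⟩

lemma kappa_mem_le (g r q k : ℤ) (hr : 1 ≤ r) (hq0 : 0 ≤ q)
    (h1 : (r+1)*q ≤ g) (h2 : g < (r+1)*q + (r+1))
    (hk1 : 1 ≤ k) (hk2 : 0 ≤ rhoK g r (dmax g r) k) : k ≤ q + r := by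
  have hR : 0 < r + 1 := by linarith
  have hd : g - dmax g r + r = q + 1 := gdr_eq g r q hR h1 h2
  have hM : 0 ≤ min r (g - dmax g r + r - 1) := by
    rw [hd]; simp only [add_sub_cancel_right]; exact le_min (by linarith) hq0
  obtain ⟨ℓ, h0, hℓ, heq⟩ := rhoK_attained g r (dmax g r) k (by omega)
  have hdd : dmax g r = g + r - q - 1 := by omega
  have hfeq : rho g (r-ℓ) (dmax g r) - ℓ*k
      = (g-(r+1)*q) - (r+1) + ℓ*(r+q+2-k) - ℓ^2 := by
    rw [hdd]; unfold rho; ring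
  rw [hfeq] at heq
  have he0 : 0 ≤ g - (r+1)*q := by linarith
  have he1 : g - (r+1)*q ≤ r := by linarith
  have hl1 : 1 ≤ ℓ := by
    rcases lt_or_ge ℓ 1 with h | h
    · exfalso
      have : ℓ = 0 := by omega
      rw [this] at heq; simp at heq; omega
    · exact h
  nlinarith [heq, hk2, mul_pos (show (0:ℤ) < ℓ by omega) (show (0:ℤ) < ℓ by omega)]

lemma kappa_le (g r q : ℤ) (hr : 1 ≤ r) (hq : 1 ≤ q)
    (h1 : (r+1)*q ≤ g) (h2 : g < (r+1)*q + (r+1)) :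
    kappa g r (dmax g r) ≤ q + r := by
  have hR : 0 < r + 1 := by linarith
  have hd : g - dmax g r + r = q + 1 := gdr_eq g r q hR h1 h2
  apply csSup_le
  · refine ⟨1, le_refl 1, ?_⟩
    have hle := rhoK_ge g r (dmax g r) 1 1 (by norm_num) (le_min hr (by omega))
    have hdd : dmax g r = g + r - q - 1 := by omega
    have hfeq : rho g (r-1) (dmax g r) - 1*1 = (g-(r+1)*q) + q - 1 := by
      rw [hdd]; unfold rho; ring
    rw [hfeq] at hle
    omega
  · rintro k ⟨hk1, hk2⟩
    exact kappa_mem_le g r q k hr (by omega) h1 h2 hk1 hk2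

lemma kappa_ge (g r q b : ℤ) (hr : 1 ≤ r) (hq : 1 ≤ q)
    (h1 : (r+1)*q ≤ g) (h2 : g < (r+1)*q + (r+1))
    (hb1 : 1 ≤ b) (hbr : b ≤ r) (hbq : b ≤ q) (hb2 : r + 1 ≤ b*b)
    (hk0 : 1 ≤ q + r + 2 - 2*b) :
    q + r + 2 - 2*b ≤ kappa g r (dmax g r) := by
  have hR : 0 < r + 1 := by linarith
  have hd : g - dmax g r + r = q + 1 := gdr_eq g r q hR h1 h2
  have hdd : dmax g r = g + r - q - 1 := by omega
  apply le_csSup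
  · exact ⟨q + r, fun k hk => kappa_mem_le g r q k hr (by omega) h1 h2 hk.1 hk.2⟩
  · refine ⟨hk0, ?_⟩
    have hle := rhoK_ge g r (dmax g r) (q+r+2-2*b) b (by omega) (le_min hbr (by omega))
    have hfeq : rho g (r-b) (dmax g r) - b*(q+r+2-2*b) = (g-(r+1)*q) - (r+1) + b*b := by
      rw [hdd]; unfold rho; ring
    rw [hfeq] at hle
    have : (0:ℤ) ≤ (g-(r+1)*q) - (r+1) + b*b := by omega
    omega

set_option maxHeartbeats 1000000 in
lemma real_core (R g b t s x a : ℝ)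
    (hx2 : x^2 = R) (hx : 1.7 ≤ x)
    (ha2 : a^2 = g) (ha0 : 0 ≤ a)
    (hb : b ≤ x + 1) (hb1 : 1 ≤ b)
    (ht : 1 ≤ t)
    (hRt : R + t = s + 1)
    (hsa : s ≤ a)
    (hg : 4*x^5 + x^4 + 2*x^3 ≤ g) :
    (t + 2*b) * (R * (R+t)) ≤ g * t := by
  subst hx2 ha2
  have hx0 : (0:ℝ) < x := by linarith
  have p1 : 1.7*x^2 ≤ x^3 := by nlinarith [mul_nonneg (sub_nonneg.mpr hx) (sq_nonneg x)]
  have p2 : 1.7*x^3 ≤ x^4 := by nlinarith [mul_nonneg (sub_nonneg.mpr hx) (pow_nonneg hx0.le 3)]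
  have p3 : 1.7*x^4 ≤ x^5 := by nlinarith [mul_nonneg (sub_nonneg.mpr hx) (pow_nonneg hx0.le 4)]
  have hbx : 2*b*x^2 ≤ 2*x^3 + 2*x^2 := by
    nlinarith [mul_nonneg (sub_nonneg.mpr hb) (sq_nonneg x)]
  have hbx2 : 2*b*(x^2)^2 ≤ 2*x^5 + 2*x^4 := by
    nlinarith [mul_nonneg (sub_nonneg.mpr hb) (pow_nonneg hx0.le 4)]
  have ht0 : (0:ℝ) ≤ t := by linarith
  rcases le_or_gt t (2*b*x^2) with hcase | hcase
  · -- small t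
    have h1 : (x^2)^2 + 2*b*x^2 + x^2 + 2*b*(x^2)^2 ≤ a^2 := by nlinarith
    have hdiff : ((x^2)^2 + 2*b*x^2 + x^2 + 2*b*(x^2)^2)*t - (t + 2*b)*(x^2*(x^2+t))
        = (t-1)*(x^2*(2*b*x^2 - t)) := by ring
    have hpos : 0 ≤ (t-1)*(x^2*(2*b*x^2 - t)) :=
      mul_nonneg (by linarith) (mul_nonneg (sq_nonneg x) (by linarith))
    have h2 := mul_le_mul_of_nonneg_right h1 ht0
    linarith
  · -- large t
    have hsq : (2*x^2)^2 ≤ a^2 := by nlinarith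
    have ha2x : 2*x^2 ≤ a := (pow_le_pow_iff_left₀ (by positivity) ha0 two_ne_zero).mp hsq
    have hxa : 2*x^2*a ≤ a^2 := by nlinarith [mul_le_mul_of_nonneg_right ha2x ha0]
    have hcub : 4*x^3 + 8*x^2 ≤ a^2 := by nlinarith
    have h4 : t ≤ a + 1 - x^2 := by linarith
    have hRt2 : x^2*t ≤ x^2*a + x^2 - (x^2)^2 := by
      nlinarith [mul_le_mul_of_nonneg_left h4 (sq_nonneg x)]
    have h5 : x^2*t + (x^2)^2 + 2*b*x^2 + x^2 ≤ a^2 := by linarith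
    have h3 : 2*b*(x^2)^2 ≤ x^2*t := by
      linarith [mul_le_mul_of_nonneg_left hcase.le (sq_nonneg x)]
    have h6 := mul_le_mul_of_nonneg_right h5 ht0
    linarith [h3, h6]

set_option maxHeartbeats 1000000 in
theorem stmt12 (r g : ℤ) (hr : 2 ≤ r)
    (hg : 4 * ((r : ℝ) + 1) ^ ((5 : ℝ) / 2) + ((r : ℝ) + 1) ^ 2 +
        2 * ((r : ℝ) + 1) ^ ((3 : ℝ) / 2) ≤ (g : ℝ)) :
    ∀ s : ℤ, r < s → s * (s + 1) ≤ g →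
      kappa g s (dmax g s) < kappa g r (dmax g r) := by
  intro s hs hss
  -- basic positivity
  have hR0 : (0:ℝ) ≤ (r:ℝ) + 1 := by
    have : (2:ℝ) ≤ (r:ℝ) := by exact_mod_cast hr
    linarith
  -- x = sqrt(r+1)
  set x : ℝ := Real.sqrt ((r:ℝ) + 1) with hxdef
  have hx2 : x^2 = (r:ℝ) + 1 := Real.sq_sqrt hR0
  have hx0 : 0 ≤ x := Real.sqrt_nonneg _
  have hx : 1.7 ≤ x := by
    nlinarith [hx2, hx0, (by exact_mod_cast hr : (2:ℝ) ≤ (r:ℝ))]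
  -- convert rpow hypotheses
  have e1 : ((r:ℝ) + 1) ^ ((5:ℝ)/2) = x^5 := by
    rw [← hx2, ← Real.rpow_natCast x 2, ← Real.rpow_mul hx0]
    rw [show ((2:ℕ):ℝ) * ((5:ℝ)/2) = ((5:ℕ):ℝ) by norm_num, Real.rpow_natCast]
  have e3 : ((r:ℝ) + 1) ^ ((3:ℝ)/2) = x^3 := by
    rw [← hx2, ← Real.rpow_natCast x 2, ← Real.rpow_mul hx0]
    rw [show ((2:ℕ):ℝ) * ((3:ℝ)/2) = ((3:ℕ):ℝ) by norm_num, Real.rpow_natCast]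
  have e2 : ((r:ℝ) + 1) ^ (2:ℕ) = x^4 := by rw [← hx2]; ring
  have hg' : 4*x^5 + x^4 + 2*x^3 ≤ (g:ℝ) := by
    rw [← e1, ← e2, ← e3]; linarith [hg]
  have hgR0 : (0:ℝ) ≤ (g:ℝ) := by nlinarith [pow_nonneg hx0 5, pow_nonneg hx0 4, pow_nonneg hx0 3]
  -- a = sqrt g
  set a : ℝ := Real.sqrt (g:ℝ) with hadef
  have ha2 : a^2 = (g:ℝ) := Real.sq_sqrt hgR0
  have ha0 : 0 ≤ a := Real.sqrt_nonneg _
  -- b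
  set b : ℤ := (Nat.sqrt r.toNat : ℤ) + 1 with hbdef
  have hrtn : (r.toNat : ℤ) = r := Int.toNat_of_nonneg (by omega)
  have hb1 : 1 ≤ b := by rw [hbdef]; omega
  have hbb : r + 1 ≤ b * b := by
    have h := Nat.lt_succ_sqrt r.toNat
    have h' : (r.toNat:ℤ) < b * b := by
      rw [hbdef]; exact_mod_cast h
    rw [hrtn] at h'
    exact h'
  have hbr : b ≤ r := by
    have h := Nat.sqrt_lt_self (show 1 < r.toNat by omega)
    have h' : b ≤ (r.toNat:ℤ) := by rw [hbdef]; exact_mod_cast h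
    omega
  have hbx : (b:ℝ) ≤ x + 1 := by
    have h1 : ((Nat.sqrt r.toNat : ℕ):ℝ) ≤ Real.sqrt (r.toNat : ℝ) :=
      Real.nat_sqrt_le_real_sqrt
    have h2 : Real.sqrt ((r.toNat:ℕ):ℝ) ≤ x := by
      apply Real.sqrt_le_sqrt
      have : ((r.toNat:ℕ):ℝ) = (r:ℝ) := by exact_mod_cast hrtn
      rw [this]; linarith
    rw [hbdef]; push_cast; linarith
  -- division for r
  obtain ⟨qr, h1r, h2r⟩ : ∃ q, (r+1)*q ≤ g ∧ g < (r+1)*q + (r+1) := by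
    refine ⟨g / (r+1), ?_, ?_⟩
    · have h := Int.emod_add_mul_ediv g (r+1)
      have h2 := Int.emod_nonneg g (show (r+1) ≠ 0 by omega)
      linarith
    · have h := Int.emod_add_mul_ediv g (r+1)
      have h2 := Int.emod_lt_of_pos g (show (0:ℤ) < r+1 by omega)
      linarith
  obtain ⟨qs, h1s, h2s⟩ : ∃ q, (s+1)*q ≤ g ∧ g < (s+1)*q + (s+1) := by
    refine ⟨g / (s+1), ?_, ?_⟩
    · have h := Int.emod_add_mul_ediv g (s+1)
      have h2 := Int.emod_nonneg g (show (s+1) ≠ 0 by omega)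
      linarith
    · have h := Int.emod_add_mul_ediv g (s+1)
      have h2 := Int.emod_lt_of_pos g (show (0:ℤ) < s+1 by omega)
      linarith
  -- qr ≥ r+1
  have hgRR : (r+1)*(r+1) ≤ g := by
    have : ((r:ℝ)+1)*((r:ℝ)+1) ≤ (g:ℝ) := by nlinarith [pow_nonneg hx0 3, pow_nonneg hx0 5]
    exact_mod_cast this
  have hqrR : r + 1 ≤ qr := by
    have h : (r+1)*(r+1) < (r+1)*(qr+1) := by linarith
    have := lt_of_mul_lt_mul_left h (show (0:ℤ) ≤ r+1 by omega)
    omega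
  -- qs ≥ s
  have hqss : s ≤ qs := by
    have h : (s+1)*s < (s+1)*(qs+1) := by nlinarith
    have := lt_of_mul_lt_mul_left h (show (0:ℤ) ≤ s+1 by omega)
    omega
  -- s ≤ a
  have hsa : (s:ℝ) ≤ a := by
    have h1 : ((s:ℝ))^2 ≤ (g:ℝ) := by
      have : (s*s : ℤ) ≤ g := by nlinarith
      have h' : ((s*s : ℤ):ℝ) ≤ (g:ℝ) := by exact_mod_cast this
      push_cast at h'; nlinarith
    have := Real.sqrt_le_sqrt h1
    rwa [Real.sqrt_sq (by exact_mod_cast (by omega : (0:ℤ) ≤ s) : (0:ℝ) ≤ (s:ℝ))] at this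
  -- the star inequality
  have hstar := real_core ((r:ℝ)+1) (g:ℝ) (b:ℝ) ((s:ℝ)-(r:ℝ)) (s:ℝ) x a
    hx2 hx ha2 ha0 hbx (by exact_mod_cast hb1)
    (by
      have : (r:ℝ) + 1 ≤ (s:ℝ) := by exact_mod_cast hs
      linarith)
    (by ring) hsa hg'
  -- integer key inequality
  have hkey : qs + (s - r) + 2*b ≤ qr := by
    have hr2 : (2:ℝ) ≤ (r:ℝ) := by exact_mod_cast hr
    have hRpos : (0:ℝ) < (r:ℝ)+1 := by linarith
    have hSpos : (0:ℝ) < (s:ℝ)+1 := by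
      have : (r:ℝ) + 1 ≤ (s:ℝ) := by exact_mod_cast hs
      linarith
    have hqr_gt : (g:ℝ)/((r:ℝ)+1) - 1 < (qr:ℝ) := by
      rw [sub_lt_iff_lt_add, div_lt_iff₀ hRpos]
      have : (g:ℝ) < ((r+1)*qr + (r+1) : ℤ) := by exact_mod_cast h2r
      push_cast at this
      nlinarith
    have hqs_le : (qs:ℝ) ≤ (g:ℝ)/((s:ℝ)+1) := by
      rw [le_div_iff₀ hSpos]
      have : ((s+1)*qs : ℤ) ≤ (g:ℝ) := by exact_mod_cast h1s
      push_cast at this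
      nlinarith
    have hdiv : ((s:ℝ)-(r:ℝ)) + 2*(b:ℝ) ≤ (g:ℝ)/((r:ℝ)+1) - (g:ℝ)/((s:ℝ)+1) := by
      rw [div_sub_div _ _ (ne_of_gt hRpos) (ne_of_gt hSpos), le_div_iff₀ (by positivity)]
      nlinarith [hstar]
    have hfin : (qs:ℝ) + ((s:ℝ)-(r:ℝ)) + 2*(b:ℝ) - 1 < (qr:ℝ) := by linarith
    have h9 : qs + (s - r) + 2*b - 1 < qr := by exact_mod_cast (show ((qs + (s - r) + 2*b - 1 : ℤ):ℝ) < ((qr:ℤ):ℝ) by push_cast; linarith)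
    omega
  -- apply kappa bounds
  have hKs : kappa g s (dmax g s) ≤ qs + s :=
    kappa_le g s qs (by omega) (by omega) h1s h2s
  have hKr : qr + r + 2 - 2*b ≤ kappa g r (dmax g r) :=
    kappa_ge g r qr b (by omega) (by omega) h1r h2r hb1 hbr (by omega) hbb (by omega)
  linarith
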